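/- Quadratic superdifferentiability from calibration: let E be a real inner product space, U : Ω → ℝ a C² function on an open set Ω ⊆ E, B̄(x,δ) ⊆ Ω a closed ball, and suppose all calibrating motions within B̄(x,δ) have speed at most A. Let γ : (−∞,0] → Ω be a C² solution of γ'' = ∇U(γ) with γ(0) = y ∈ B̄(x, δ/4), and let z ∈ B̄(x, δ/4). Define γ_z(t) = γ(t) + ((t+ε)/ε)(z−y) on [−ε,0] with ε = (δ/4)/A, and γ_z = γ on (−∞,−ε]. If u satisfies u(z) − u(γ(−ε)) ≤ ∫_{−ε}^0 (½‖γ_z'‖² + U(γ_z) + h) dt and u(y) − u(γ(−ε)) = ∫_{−ε}^0 (½‖γ'‖² + U(γ) + h) dt, then there is K > 0 (depending only on δ, A, and sup of ‖Hess U‖ on B̄(x,δ)) such that u(z) − u(y) ≤ ⟨γ'(0), z − y⟩ + K‖z − y‖². -/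

import Mathlib

open RealInnerProductSpace MeasureTheory intervalIntegral

set_option maxHeartbeats 1000000 in
/-- Quadratic superdifferentiability from calibration: along a calibrating
curve `γ` of a dominated function `u`, with speed bound `A` and Hessian bound
on the ball, one gets the upper quadratic estimate with supergradient `γ' 0`. -/
theorem stmt15 {E : Type*} [NormedAddCommGroup E] [InnerProductSpace ℝ E]
    [FiniteDimensional ℝ E]
    (Ω : Set E) (hΩ : IsOpen Ω) (U : E → ℝ) (hU : ContDiffOn ℝ 2 U Ω)
    (x : E) (δ A h : ℝ) (hδ : 0 < δ) (hA : 0 < A) (hh : 0 < h)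
    (hball : Metric.closedBall x δ ⊆ Ω)
    (γ γ' : ℝ → E)
    (hγ : ∀ t ≤ (0:ℝ), HasDerivAt γ (γ' t) t)
    (hγ'' : ∀ t ≤ (0:ℝ), HasDerivAt γ' (gradient U (γ t)) t)
    (hγΩ : ∀ t ≤ (0:ℝ), γ t ∈ Ω)
    (hy : γ 0 ∈ Metric.closedBall x (δ / 4))
    (hspeed : ∀ t ∈ Set.Icc (-(δ / 4 / A)) (0:ℝ), ‖γ' t‖ ≤ A)
    (u : E → ℝ) :
    ∃ K > 0, ∀ z ∈ Metric.closedBall x (δ / 4),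
      (u z - u (γ (-(δ / 4 / A))) ≤
        ∫ t in (-(δ / 4 / A))..(0:ℝ),
          (‖deriv (fun s => γ s + ((s + δ / 4 / A) / (δ / 4 / A)) • (z - γ 0)) t‖ ^ 2 / 2
            + U (γ t + ((t + δ / 4 / A) / (δ / 4 / A)) • (z - γ 0)) + h)) →
      (u (γ 0) - u (γ (-(δ / 4 / A))) =
        ∫ t in (-(δ / 4 / A))..(0:ℝ), (‖γ' t‖ ^ 2 / 2 + U (γ t) + h)) →
      u z - u (γ 0) ≤ ⟪γ' 0, z - γ 0⟫ + K * ‖z - γ 0‖ ^ 2 := by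
  set ε : ℝ := δ / 4 / A with hεdef
  have hε : 0 < ε := div_pos (by linarith) hA
  have hAε : A * ε = δ / 4 := by rw [hεdef]; field_simp
  have hBconv : Convex ℝ (Metric.closedBall x δ) := convex_closedBall x δ
  -- differentiability facts for U
  have hUd : ∀ a ∈ Ω, HasFDerivAt U (fderiv ℝ U a) a := fun a ha =>
    ((hU.contDiffAt (hΩ.mem_nhds ha)).differentiableAt (by norm_num)).hasFDerivAt
  have hU1 : ContDiffOn ℝ 1 (fderiv ℝ U) Ω := hU.fderiv_of_isOpen hΩ (by norm_num)
  have hcont2 : ContinuousOn (fderiv ℝ (fderiv ℝ U)) Ω :=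
    hU1.continuousOn_fderiv_of_isOpen hΩ le_rfl
  -- bound M on the second derivative on the ball
  obtain ⟨M, hM⟩ := (isCompact_closedBall x δ).exists_bound_of_continuousOn
    (f := fderiv ℝ (fderiv ℝ U)) (hcont2.mono hball)
  have hM0 : 0 ≤ M := le_trans (norm_nonneg _) (hM x (by simp [hδ.le]))
  -- Lipschitz bound for fderiv U on the ball
  have hLip : ∀ a ∈ Metric.closedBall x δ, ∀ b ∈ Metric.closedBall x δ,
      ‖fderiv ℝ U b - fderiv ℝ U a‖ ≤ M * ‖b - a‖ := by
    intro a ha b hb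
    exact hBconv.norm_image_sub_le_of_norm_hasFDerivWithin_le
      (f := fderiv ℝ U) (f' := fun w => fderiv ℝ (fderiv ℝ U) w)
      (fun w hw => ((hU1.contDiffAt (hΩ.mem_nhds (hball hw))).differentiableAt
        (by norm_num)).hasFDerivAt.hasFDerivWithinAt)
      (fun w hw => hM w hw) ha hb
  -- Taylor estimate
  have hTaylor : ∀ a ∈ Metric.closedBall x δ, ∀ v : E, a + v ∈ Metric.closedBall x δ →
      U (a + v) - U a ≤ fderiv ℝ U a v + M * ‖v‖ ^ 2 := by
    intro a ha v hav
    have hseg : segment ℝ a (a + v) ⊆ Metric.closedBall x δ := hBconv.segment_subset ha hav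
    have key := (convex_segment a (a + v)).norm_image_sub_le_of_norm_hasFDerivWithin_le'
      (f := U) (f' := fun w => fderiv ℝ U w) (φ := fderiv ℝ U a) (C := M * ‖v‖)
      (fun w hw => (hUd w (hball (hseg hw))).hasFDerivWithinAt)
      (fun w hw => by
        have hwB := hseg hw
        have h1 := hLip a ha w hwB
        have h2 : ‖w - a‖ ≤ ‖v‖ := by
          rcases hw with ⟨p, q, hp, hq, hpq, rfl⟩
          have hwa : p • a + q • (a + v) - a = (p + q - 1) • a + q • v := by module
          rw [hpq] at hwa
          simp only [sub_self, zero_smul, zero_add] at hwa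
          rw [hwa, norm_smul]
          have : q ≤ 1 := by linarith
          calc ‖q‖ * ‖v‖ = q * ‖v‖ := by rw [Real.norm_of_nonneg hq]
            _ ≤ 1 * ‖v‖ := mul_le_mul_of_nonneg_right this (norm_nonneg v)
            _ = ‖v‖ := one_mul _
        calc ‖fderiv ℝ U w - fderiv ℝ U a‖ ≤ M * ‖w - a‖ := h1
          _ ≤ M * ‖v‖ := mul_le_mul_of_nonneg_left h2 hM0)
      (left_mem_segment ℝ a (a + v)) (right_mem_segment ℝ a (a + v))
    simp only [add_sub_cancel_left] at key
    have := abs_le.1 (by rwa [Real.norm_eq_abs] at key)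
    nlinarith [this.2]
  -- continuity of γ and γ' on the negative half line
  have hγcOn : ContinuousOn γ (Set.Icc (-ε) 0) :=
    fun t ht => (hγ t ht.2).continuousAt.continuousWithinAt
  have hγ'cOn : ContinuousOn γ' (Set.Icc (-ε) 0) :=
    fun t ht => (hγ'' t ht.2).continuousAt.continuousWithinAt
  -- γ stays in the half ball
  have hγball : ∀ t ∈ Set.Icc (-ε) (0:ℝ), γ t ∈ Metric.closedBall x (δ / 2) := by
    intro t ht
    have h0mem : (0:ℝ) ∈ Set.Icc (-ε) (0:ℝ) := Set.right_mem_Icc.2 (by linarith)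
    have hdist : ‖γ 0 - γ t‖ ≤ A * ‖(0:ℝ) - t‖ :=
      (convex_Icc (-ε) 0).norm_image_sub_le_of_norm_hasDerivWithin_le
        (fun s hs => (hγ s hs.2).hasDerivWithinAt)
        (fun s hs => hspeed s hs) ht h0mem
    have habs : ‖(0:ℝ) - t‖ ≤ ε := by
      rw [zero_sub, norm_neg, Real.norm_eq_abs, abs_of_nonpos ht.2]
      linarith [ht.1]
    have hle : ‖γ 0 - γ t‖ ≤ δ / 4 := by
      calc ‖γ 0 - γ t‖ ≤ A * ‖(0:ℝ) - t‖ := hdist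
        _ ≤ A * ε := mul_le_mul_of_nonneg_left habs hA.le
        _ = δ / 4 := hAε
    have hy' : dist (γ 0) x ≤ δ / 4 := Metric.mem_closedBall.1 hy
    rw [Metric.mem_closedBall]
    calc dist (γ t) x ≤ dist (γ t) (γ 0) + dist (γ 0) x := dist_triangle _ _ _
      _ ≤ δ / 4 + δ / 4 := by
          refine add_le_add ?_ hy'
          rw [dist_eq_norm, ← norm_neg]
          simpa [neg_sub] using hle
      _ = δ / 2 := by ring
  -- choose K
  refine ⟨1 / (2 * ε) + M * ε, by positivity, ?_⟩
  intro z hz hineq heq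
  set w : E := z - γ 0 with hwdef
  have hwnorm : ‖w‖ ≤ δ / 2 := by
    have htri : dist z (γ 0) ≤ dist z x + dist x (γ 0) := dist_triangle _ _ _
    have hz' : dist z x ≤ δ / 4 := Metric.mem_closedBall.1 hz
    have hy' : dist x (γ 0) ≤ δ / 4 := by rw [dist_comm]; exact Metric.mem_closedBall.1 hy
    calc ‖w‖ = dist z (γ 0) := (dist_eq_norm _ _).symm
      _ ≤ δ / 4 + δ / 4 := le_trans htri (add_le_add hz' hy')
      _ = δ / 2 := by ring
  -- perturbed curve stays in the ball
  have hs01 : ∀ t ∈ Set.Icc (-ε) (0:ℝ), (t + ε) / ε ∈ Set.Icc (0:ℝ) 1 := by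
    intro t ht
    constructor
    · apply div_nonneg _ hε.le; linarith [ht.1]
    · rw [div_le_one hε]; linarith [ht.2]
  have hγzball : ∀ t ∈ Set.Icc (-ε) (0:ℝ),
      γ t + ((t + ε) / ε) • w ∈ Metric.closedBall x δ := by
    intro t ht
    have hsm := hs01 t ht
    have hsw : ‖((t + ε) / ε) • w‖ ≤ δ / 2 := by
      rw [norm_smul, Real.norm_of_nonneg hsm.1]
      calc ((t + ε) / ε) * ‖w‖ ≤ 1 * ‖w‖ :=
            mul_le_mul_of_nonneg_right hsm.2 (norm_nonneg _)
        _ = ‖w‖ := one_mul _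
        _ ≤ δ / 2 := hwnorm
    have hg := hγball t ht
    rw [Metric.mem_closedBall] at hg ⊢
    have hre : γ t + ((t + ε) / ε) • w - x = ((t + ε) / ε) • w + (γ t - x) := by abel
    calc dist (γ t + ((t + ε) / ε) • w) x
        = ‖((t + ε) / ε) • w + (γ t - x)‖ := by rw [dist_eq_norm, hre]
      _ ≤ ‖((t + ε) / ε) • w‖ + ‖γ t - x‖ := norm_add_le _ _
      _ ≤ δ / 2 + δ / 2 := add_le_add hsw (by rw [← dist_eq_norm]; exact hg)
      _ = δ := by ring
  -- auxiliary linear map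
  set L : E →L[ℝ] ℝ := (innerSL ℝ).flip w with hLdef
  have hLapp : ∀ v : E, L v = ⟪v, w⟫ := fun v => rfl
  have hLgrad : ∀ a ∈ Ω, ⟪gradient U a, w⟫ = fderiv ℝ U a w := by
    intro a ha
    exact InnerProductSpace.toDual_symm_apply
  -- the function F and its derivative
  set F : ℝ → ℝ := fun t => ((t + ε) / ε) * ⟪γ' t, w⟫ with hFdef
  set F' : ℝ → ℝ := fun t => (1 / ε) * ⟪γ' t, w⟫ + ((t + ε) / ε) * ⟪gradient U (γ t), w⟫
    with hF'def
  have hF : ∀ t ≤ (0:ℝ), HasDerivAt F (F' t) t := by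
    intro t ht
    have h1 : HasDerivAt (fun s : ℝ => (s + ε) / ε) (1 / ε) t := by
      simpa using ((hasDerivAt_id t).add_const ε).div_const ε
    have h2 : HasDerivAt (fun s => L (γ' s)) (L (gradient U (γ t))) t :=
      L.hasFDerivAt.comp_hasDerivAt t (hγ'' t ht)
    exact h1.mul h2
  -- continuity of the pieces
  have hinnerγ' : ContinuousOn (fun t => ⟪γ' t, w⟫) (Set.Icc (-ε) 0) :=
    L.continuous.comp_continuousOn hγ'cOn
  have hgradc : ContinuousOn (fun t => gradient U (γ t)) (Set.Icc (-ε) 0) := by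
    have h1 : ContinuousOn (fun t => fderiv ℝ U (γ t)) (Set.Icc (-ε) 0) :=
      hU1.continuousOn.comp hγcOn (fun t ht => hγΩ t ht.2)
    exact ((InnerProductSpace.toDual ℝ E).symm.continuous.comp_continuousOn h1 :)
  have hinnergrad : ContinuousOn (fun t => ⟪gradient U (γ t), w⟫) (Set.Icc (-ε) 0) :=
    L.continuous.comp_continuousOn hgradc
  have htε : ContinuousOn (fun t : ℝ => (t + ε) / ε) (Set.Icc (-ε) 0) :=
    ((continuous_id.add continuous_const).div_const ε).continuousOn
  have hF'c : ContinuousOn F' (Set.Icc (-ε) 0) := by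
    rw [hF'def]
    exact (continuousOn_const.mul hinnerγ').add (htε.mul hinnergrad)
  have hUγc : ContinuousOn (fun t => U (γ t)) (Set.Icc (-ε) 0) :=
    hU.continuousOn.comp hγcOn (fun t ht => hγΩ t ht.2)
  have hUγzc : ContinuousOn (fun t => U (γ t + ((t + ε) / ε) • w)) (Set.Icc (-ε) 0) := by
    refine hU.continuousOn.comp ?_ (fun t ht => hγzball t ht |> hball)
    exact hγcOn.add (htε.smul continuousOn_const)
  have huIcc : Set.uIcc (-ε) (0:ℝ) = Set.Icc (-ε) 0 := Set.uIcc_of_le (by linarith)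
  -- integral of F'
  have hF'int : IntervalIntegrable F' volume (-ε) 0 := by
    apply ContinuousOn.intervalIntegrable
    rwa [huIcc]
  have hF'eval : ∫ t in (-ε)..(0:ℝ), F' t = ⟪γ' 0, w⟫ := by
    have heval := intervalIntegral.integral_eq_sub_of_hasDerivAt
      (f := F) (f' := F') (fun t ht => hF t (by rw [huIcc] at ht; exact ht.2)) hF'int
    rw [heval]
    have hF0 : F 0 = ⟪γ' 0, w⟫ := by
      rw [hFdef]; simp [div_self hε.ne']
    have hFε : F (-ε) = 0 := by
      rw [hFdef]; simp
    rw [hF0, hFε, sub_zero]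
  -- the two integrands
  set c : ℝ := ‖w‖ ^ 2 / (2 * ε ^ 2) + M * ‖w‖ ^ 2 with hcdef
  set g₁ : ℝ → ℝ := fun t => ‖γ' t + ε⁻¹ • w‖ ^ 2 / 2 + U (γ t + ((t + ε) / ε) • w) + h
    with hg₁def
  set g₂ : ℝ → ℝ := fun t => (‖γ' t‖ ^ 2 / 2 + U (γ t) + h) + (F' t + c) with hg₂def
  have hg₁c : ContinuousOn g₁ (Set.Icc (-ε) 0) := by
    rw [hg₁def]
    exact ((((hγ'cOn.add continuousOn_const).norm.pow 2).div_const 2).add hUγzc).add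
      continuousOn_const
  have hbasec : ContinuousOn (fun t => ‖γ' t‖ ^ 2 / 2 + U (γ t) + h) (Set.Icc (-ε) 0) :=
    (((hγ'cOn.norm.pow 2).div_const 2).add hUγc).add continuousOn_const
  have hg₂c : ContinuousOn g₂ (Set.Icc (-ε) 0) := by
    rw [hg₂def]
    exact hbasec.add (hF'c.add continuousOn_const)
  have hg₁int : IntervalIntegrable g₁ volume (-ε) 0 := by
    apply ContinuousOn.intervalIntegrable; rwa [huIcc]
  have hg₂int : IntervalIntegrable g₂ volume (-ε) 0 := by
    apply ContinuousOn.intervalIntegrable; rwa [huIcc]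
  have hbaseint : IntervalIntegrable (fun t => ‖γ' t‖ ^ 2 / 2 + U (γ t) + h) volume (-ε) 0 := by
    apply ContinuousOn.intervalIntegrable; rwa [huIcc]
  -- rewrite the deriv in the hypothesis
  have hderiv_eq : Set.EqOn
      (fun t => ‖deriv (fun s => γ s + ((s + ε) / ε) • w) t‖ ^ 2 / 2
        + U (γ t + ((t + ε) / ε) • w) + h) g₁ (Set.uIcc (-ε) 0) := by
    intro t ht
    rw [huIcc] at ht
    have hd : HasDerivAt (fun s => γ s + ((s + ε) / ε) • w) (γ' t + ε⁻¹ • w) t := by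
      have h1 : HasDerivAt (fun s : ℝ => (s + ε) / ε) (1 / ε) t := by
        simpa using ((hasDerivAt_id t).add_const ε).div_const ε
      have h2 := h1.smul_const w
      have h3 := (hγ t ht.2).add h2
      exact h3.congr_deriv (by simp [one_div])
    simp only [hg₁def, hd.deriv]
  have hineq' : u z - u (γ (-ε)) ≤ ∫ t in (-ε)..(0:ℝ), g₁ t := by
    calc u z - u (γ (-ε)) ≤ _ := hineq
      _ = ∫ t in (-ε)..(0:ℝ), g₁ t := intervalIntegral.integral_congr hderiv_eq
  -- pointwise comparison
  have hpt : ∀ t ∈ Set.Icc (-ε) (0:ℝ), g₁ t ≤ g₂ t := by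
    intro t ht
    have hsm := hs01 t ht
    have hγtB : γ t ∈ Metric.closedBall x δ :=
      Metric.closedBall_subset_closedBall (by linarith) (hγball t ht)
    have hγztB : γ t + ((t + ε) / ε) • w ∈ Metric.closedBall x δ := hγzball t ht
    have hT := hTaylor (γ t) hγtB (((t + ε) / ε) • w) hγztB
    have hfd : fderiv ℝ U (γ t) (((t + ε) / ε) • w) = ((t + ε) / ε) * fderiv ℝ U (γ t) w := by
      rw [ContinuousLinearMap.map_smul, smul_eq_mul]
    have hgradeq : ⟪gradient U (γ t), w⟫ = fderiv ℝ U (γ t) w := hLgrad _ (hγΩ t ht.2)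
    have hsq : M * ‖((t + ε) / ε) • w‖ ^ 2 ≤ M * ‖w‖ ^ 2 := by
      rw [norm_smul, Real.norm_of_nonneg hsm.1]
      have h1 : (t + ε) / ε * ‖w‖ ≤ 1 * ‖w‖ :=
        mul_le_mul_of_nonneg_right hsm.2 (norm_nonneg _)
      have h2 : 0 ≤ (t + ε) / ε * ‖w‖ := mul_nonneg hsm.1 (norm_nonneg _)
      have h3 : ((t + ε) / ε * ‖w‖) ^ 2 ≤ ‖w‖ ^ 2 :=
        pow_le_pow_left₀ h2 (by linarith) 2
      exact mul_le_mul_of_nonneg_left h3 hM0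
    have hnorm : ‖γ' t + ε⁻¹ • w‖ ^ 2
        = ‖γ' t‖ ^ 2 + 2 * (ε⁻¹ * ⟪γ' t, w⟫) + ε⁻¹ ^ 2 * ‖w‖ ^ 2 := by
      rw [norm_add_sq_real, real_inner_smul_right, norm_smul,
        Real.norm_of_nonneg (by positivity : (0:ℝ) ≤ ε⁻¹), mul_pow]
    have hUineq : U (γ t + ((t + ε) / ε) • w) - U (γ t)
        ≤ ((t + ε) / ε) * ⟪gradient U (γ t), w⟫ + M * ‖w‖ ^ 2 := by
      rw [hgradeq]
      calc U (γ t + ((t + ε) / ε) • w) - U (γ t)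
          ≤ fderiv ℝ U (γ t) (((t + ε) / ε) • w) + M * ‖((t + ε) / ε) • w‖ ^ 2 := hT
        _ ≤ ((t + ε) / ε) * fderiv ℝ U (γ t) w + M * ‖w‖ ^ 2 := by rw [hfd]; linarith [hsq]
    have hεinv : ε⁻¹ ^ 2 * ‖w‖ ^ 2 / 2 = ‖w‖ ^ 2 / (2 * ε ^ 2) := by
      field_simp
    simp only [hg₁def, hg₂def, hF'def, hcdef, one_div]
    rw [hnorm]
    linarith [hUineq, hεinv]
  -- compare integrals
  have hmono : ∫ t in (-ε)..(0:ℝ), g₁ t ≤ ∫ t in (-ε)..(0:ℝ), g₂ t :=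
    intervalIntegral.integral_mono_on (by linarith) hg₁int hg₂int hpt
  -- compute ∫ g₂
  have hsplit : ∫ t in (-ε)..(0:ℝ), g₂ t
      = (∫ t in (-ε)..(0:ℝ), (‖γ' t‖ ^ 2 / 2 + U (γ t) + h))
        + ((∫ t in (-ε)..(0:ℝ), F' t) + ε * c) := by
    simp only [hg₂def]
    rw [intervalIntegral.integral_add hbaseint (hF'int.add intervalIntegrable_const)]
    congr 1
    rw [intervalIntegral.integral_add hF'int intervalIntegrable_const]
    congr 1
    rw [intervalIntegral.integral_const, smul_eq_mul]
    ring
  have hfinal : u z - u (γ 0) ≤ ⟪γ' 0, w⟫ + ε * c := by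
    have hchain := le_trans hineq' hmono
    rw [hsplit, ← heq, hF'eval] at hchain
    linarith
  have hεc : ε * c = (1 / (2 * ε) + M * ε) * ‖w‖ ^ 2 := by
    rw [hcdef]
    field_simp
  rw [hεc] at hfinal
  exact hfinal
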